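/- arXiv:1401.7811 — 6 statements merged into one kernel-verified Lean document; each statement's English description precedes it below -/
import Mathlib

section
/- Let E be a real Hilbert space, L : E → E a self-adjoint bounded linear isomorphism, and let φ_t denote the flow x·t generated by an equation whose time-T map has the form x·T = e^{TL}x + K(x,T) with K(·,T) compact (mapping bounded sets into precompact sets). Let N ⊂ E be a closed bounded set with N ⊂ B(0,s). If (x_n) is a sequence in N with x_n·t ∈ N for all t ∈ (−n, n), then (x_n) has a convergent subsequence. -/
set_option maxHeartbeats 1000000

open Set Filter Topology Metric RealInnerProductSpace

section aux

variable {E : Type*} [NormedAddCommGroup E] [NormedSpace ℝ E] [CompleteSpace E]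

lemma exp_apply_hasSum (A : E →L[ℝ] E) (v : E) :
    HasSum (fun n : ℕ => ((Nat.factorial n : ℝ))⁻¹ • (A ^ n) v)
      (NormedSpace.exp A v) := by
  have hs : Summable fun n : ℕ => ((Nat.factorial n : ℝ))⁻¹ • A ^ n :=
    NormedSpace.expSeries_summable' A
  have h2 := hs.hasSum.mapL (ContinuousLinearMap.apply ℝ E v)
  rw [NormedSpace.exp_eq_tsum ℝ]
  simpa [← hs.hasSum.tsum_eq] using h2

lemma exp_mem_of_invariant (A : E →L[ℝ] E) (S : Submodule ℝ E)
    (hScl : IsClosed (S : Set E)) (hA : ∀ v ∈ S, A v ∈ S) :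
    ∀ v ∈ S, NormedSpace.exp A v ∈ S := by
  intro v hv
  have hterm : ∀ n : ℕ, ((Nat.factorial n : ℝ))⁻¹ • (A ^ n) v ∈ S := by
    intro n
    have hpow : ∀ n : ℕ, (A ^ n) v ∈ S := by
      intro n
      induction n with
      | zero => simpa using hv
      | succ k ih =>
        rw [pow_succ']
        exact hA _ ih
    exact S.smul_mem _ (hpow n)
  refine hScl.mem_of_tendsto (exp_apply_hasSum A v) (Filter.Eventually.of_forall ?_)
  intro t
  exact S.sum_mem fun i _ => hterm i

lemma exp_neg_apply_exp_apply (A : E →L[ℝ] E) (v : E) :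
    NormedSpace.exp (-A) (NormedSpace.exp A v) = v := by
  have h : NormedSpace.exp (-A) * NormedSpace.exp A = 1 := by
    rw [← NormedSpace.exp_add_of_commute_of_mem_ball (𝕂 := ℝ) (Commute.neg_left (Commute.refl A))
      ((NormedSpace.expSeries_radius_eq_top ℝ (E →L[ℝ] E)).symm ▸ edist_lt_top _ _)
      ((NormedSpace.expSeries_radius_eq_top ℝ (E →L[ℝ] E)).symm ▸ edist_lt_top _ _)]
    simp [NormedSpace.exp_zero]
  calc NormedSpace.exp (-A) (NormedSpace.exp A v)
      = (NormedSpace.exp (-A) * NormedSpace.exp A) v := rfl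
    _ = v := by rw [h]; rfl

end aux

/-- In a real Hilbert space `E` with a self-adjoint bounded linear
isomorphism `L`, for a flow whose time-`t` map has the form
`x · t = e^{tL} x + K(x,t)` with `K(·,t)` mapping bounded sets to precompact sets,
and with the spectral splitting `E = E⁺ ⊕ E⁻` of `L` together with the expansion
estimates `‖e^{TL}v‖ ≥ c(T)‖v‖` on `E⁺` (and backwards on `E⁻`), `c(T) → ∞`:
any sequence `(xₙ)` in a closed bounded set `N ⊆ B(0,s)` with `xₙ · t ∈ N` for
all `t ∈ (−n, n)` has a convergent subsequence. -/
theorem stmt_0 {E : Type*} [NormedAddCommGroup E] [InnerProductSpace ℝ E] [CompleteSpace E]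
    (L : E ≃L[ℝ] E)
    (hLsa : ∀ x y : E, ⟪L x, y⟫ = ⟪x, L y⟫)
    -- the flow and the decomposition of its time-t maps: x · t = e^{tL} x + K(x,t)
    (φ : E → ℝ → E) (K : E → ℝ → E)
    (hφ0 : ∀ x, φ x 0 = x)
    (hφadd : ∀ x s t, φ (φ x s) t = φ x (s + t))
    (hφ : ∀ (x : E) (t : ℝ),
      φ x t = NormedSpace.exp (t • (L : E →L[ℝ] E)) x + K x t)
    (hK : ∀ (t : ℝ) (B : Set E), Bornology.IsBounded B →
      TotallyBounded ((fun x => K x t) '' B))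
    -- the orthogonal spectral splitting of L
    (Epos Eneg : Submodule ℝ E) (hcompl : IsCompl Epos Eneg)
    (horth : ∀ v ∈ Epos, ∀ w ∈ Eneg, ⟪v, w⟫ = 0)
    (hLpos : ∀ v ∈ Epos, L v ∈ Epos) (hLneg : ∀ v ∈ Eneg, L v ∈ Eneg)
    -- expansion estimates with c(T) → ∞
    (c : ℝ → ℝ) (hc : Tendsto c atTop atTop)
    (hexp : ∀ T > (0:ℝ), ∀ v ∈ Epos,
      c T * ‖v‖ ≤ ‖NormedSpace.exp (T • (L : E →L[ℝ] E)) v‖)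
    (hexpneg : ∀ T > (0:ℝ), ∀ v ∈ Eneg,
      c T * ‖v‖ ≤ ‖NormedSpace.exp ((-T) • (L : E →L[ℝ] E)) v‖)
    -- the closed bounded set N ⊆ B(0,s) and the sequence
    (s : ℝ) (N : Set E) (hNc : IsClosed N) (hNb : N ⊆ ball 0 s)
    (x : ℕ → E) (hxN : ∀ n, x n ∈ N)
    (hx : ∀ (n : ℕ), ∀ t ∈ Ioo (-(n:ℝ)) (n:ℝ), φ (x n) t ∈ N) :
    ∃ (g : ℕ → ℕ) (y : E), StrictMono g ∧ Tendsto (x ∘ g) atTop (𝓝 y) := by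
  classical
  -- identify Eneg = Eposᗮ and Epos = Enegᗮ
  have hEn : Eneg = Eposᗮ := by
    refine le_antisymm (fun w hw => (Submodule.mem_orthogonal _ _).2
      fun u hu => horth u hu w hw) ?_
    intro v hv
    obtain ⟨p, q, hp, hq, hsum⟩ := Submodule.codisjoint_iff_exists_add_eq.mp hcompl.codisjoint v
    have h1 : ⟪p, v⟫ = 0 := (Submodule.mem_orthogonal _ _).1 hv p hp
    have h2 : ⟪p, q⟫ = 0 := horth p hp q hq
    have hp0 : p = 0 := by
      have : ⟪p, p⟫ = (0:ℝ) := by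
        have := h1
        rw [← hsum, inner_add_right, h2, add_zero] at this
        exact this
      exact inner_self_eq_zero.1 this
    rw [← hsum, hp0, zero_add]
    exact hq
  have hEp : Epos = Enegᗮ := by
    refine le_antisymm (fun v hv => (Submodule.mem_orthogonal _ _).2
      fun w hw => by rw [real_inner_comm]; exact horth v hv w hw) ?_
    intro v hv
    obtain ⟨p, q, hp, hq, hsum⟩ := Submodule.codisjoint_iff_exists_add_eq.mp hcompl.codisjoint v
    have h1 : ⟪q, v⟫ = 0 := (Submodule.mem_orthogonal _ _).1 hv q hq
    have h2 : ⟪q, p⟫ = 0 := by rw [real_inner_comm]; exact horth p hp q hq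
    have hq0 : q = 0 := by
      have : ⟪q, q⟫ = (0:ℝ) := by
        have := h1
        rw [← hsum, inner_add_right, h2, zero_add] at this
        exact this
      exact inner_self_eq_zero.1 this
    rw [← hsum, hq0, add_zero]
    exact hp
  subst hEn
  have hEposC : IsClosed (Epos : Set E) := by rw [hEp]; exact Submodule.isClosed_orthogonal _
  have hEnegC : IsClosed (Eposᗮ : Set E) := Submodule.isClosed_orthogonal _
  haveI : CompleteSpace Epos := hEposC.completeSpace_coe
  haveI : CompleteSpace Eposᗮ := hEnegC.completeSpace_coe
  set L' : E →L[ℝ] E := (L : E →L[ℝ] E) with hL'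
  -- exp preserves the subspaces
  have hexpPos : ∀ (t : ℝ), ∀ v ∈ Epos, NormedSpace.exp (t • L') v ∈ Epos := by
    intro t
    exact exp_mem_of_invariant _ _ hEposC (fun v hv => by
      simpa [hL'] using Epos.smul_mem t (hLpos v hv))
  have hexpNeg : ∀ (t : ℝ), ∀ v ∈ Eposᗮ, NormedSpace.exp (t • L') v ∈ Eposᗮ := by
    intro t
    exact exp_mem_of_invariant _ _ hEnegC (fun v hv => by
      simpa [hL'] using Eposᗮ.smul_mem t (hLneg v hv))
  -- projections
  set Pp : E →L[ℝ] E := Epos.subtypeL.comp (Epos.orthogonalProjectionOnto) with hPp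
  set Pn : E →L[ℝ] E := Eposᗮ.subtypeL.comp (Eposᗮ.orthogonalProjectionOnto) with hPn
  have hPpmem : ∀ z, Pp z ∈ Epos := fun z => (Epos.orthogonalProjectionOnto z).2
  have hPnmem : ∀ z, Pn z ∈ Eposᗮ := fun z => (Eposᗮ.orthogonalProjectionOnto z).2
  have hsplit : ∀ z : E, Pp z + Pn z = z := by
    intro z
    exact Submodule.starProjection_add_starProjection_orthogonal (K := Epos) z
  have hPpapply : ∀ u ∈ Epos, ∀ w ∈ Eposᗮ, Pp (u + w) = u := by
    intro u hu w hw
    have h1 : (Epos.orthogonalProjectionOnto u : E) = u :=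
      Submodule.starProjection_eq_self_iff.2 hu
    have h2 : Epos.orthogonalProjectionOnto w = 0 :=
      Submodule.orthogonalProjectionOnto_apply_of_mem_orthogonal hw
    simp only [hPp, ContinuousLinearMap.comp_apply, map_add, h2, add_zero]
    simpa using h1
  have hPnapply : ∀ u ∈ Epos, ∀ w ∈ Eposᗮ, Pn (u + w) = w := by
    intro u hu w hw
    have h1 : (Eposᗮ.orthogonalProjectionOnto w : E) = w :=
      Submodule.starProjection_eq_self_iff.2 hw
    have h2 : Eposᗮ.orthogonalProjectionOnto u = 0 :=
      Submodule.orthogonalProjectionOnto_apply_of_mem_orthogonal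
        (Epos.le_orthogonal_orthogonal hu)
    simp only [hPn, ContinuousLinearMap.comp_apply, map_add, h2, zero_add]
    simpa using h1
  have hPpnorm : ∀ z, ‖Pp z‖ ≤ ‖z‖ := by
    intro z
    have h := Submodule.norm_sq_eq_add_norm_sq_projection z Epos
    have : ‖Pp z‖ ^ 2 ≤ ‖z‖ ^ 2 := by
      have hh : ‖Pp z‖ = ‖Epos.orthogonalProjectionOnto z‖ := by simp [hPp]
      rw [hh, h]
      nlinarith [sq_nonneg ‖(Eposᗮ.orthogonalProjectionOnto z : Eposᗮ)‖]
    nlinarith [norm_nonneg (Pp z), norm_nonneg z]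
  have hPnnorm : ∀ z, ‖Pn z‖ ≤ ‖z‖ := by
    intro z
    have h := Submodule.norm_sq_eq_add_norm_sq_projection z Epos
    have h2 : ‖Pn z‖ ^ 2 ≤ ‖z‖ ^ 2 := by
      have hh : ‖Pn z‖ = ‖Eposᗮ.orthogonalProjectionOnto z‖ := by simp [hPn]
      rw [hh, h]
      nlinarith [sq_nonneg ‖(Epos.orthogonalProjectionOnto z : Epos)‖]
    nlinarith [norm_nonneg (Pn z), norm_nonneg z]
  -- inverse relations for exp
  have hinv1 : ∀ (T : ℝ) (v : E),
      NormedSpace.exp ((-T) • L') (NormedSpace.exp (T • L') v) = v := by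
    intro T v
    rw [neg_smul]
    exact exp_neg_apply_exp_apply (T • L') v
  have hinv2 : ∀ (T : ℝ) (v : E),
      NormedSpace.exp (T • L') (NormedSpace.exp ((-T) • L') v) = v := by
    intro T v
    have := exp_neg_apply_exp_apply ((-T) • L') v
    simpa [neg_smul, neg_neg] using this
  -- s is positive
  have hs0 : (0:ℝ) < s := lt_of_le_of_lt (norm_nonneg (x 0))
    (mem_ball_zero_iff.1 (hNb (hxN 0)))
  have hNbd : Bornology.IsBounded N := (isBounded_ball).subset hNb
  have hnormN : ∀ z ∈ N, ‖z‖ ≤ s := fun z hz => le_of_lt (mem_ball_zero_iff.1 (hNb hz))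
  -- total boundedness of the range of x
  have hTB : TotallyBounded (Set.range x) := by
    rw [Metric.totallyBounded_iff]
    intro ε hε
    obtain ⟨T, hcT, hT1⟩ :=
      ((hc.eventually_ge_atTop (max 1 (4 * s / ε))).and (eventually_ge_atTop (1:ℝ))).exists
    have hTpos : (0:ℝ) < T := lt_of_lt_of_le one_pos hT1
    have hcT1 : (1:ℝ) ≤ c T := le_trans (le_max_left _ _) hcT
    have hcTpos : (0:ℝ) < c T := lt_of_lt_of_le one_pos hcT1
    have h4 : 4 * s / ε ≤ c T := le_trans (le_max_right _ _) hcT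
    have h4' : 4 * s ≤ c T * ε := (div_le_iff₀ hε).1 h4
    have hsc : s / c T ≤ ε / 4 := by
      rw [div_le_div_iff₀ hcTpos (by norm_num : (0:ℝ) < 4)]
      nlinarith
    -- totally bounded images
    have hA' : TotallyBounded ((fun z => Pn (K z T)) '' N) := by
      have := (hK T N hNbd).image Pn.uniformContinuous
      rwa [Set.image_image] at this
    have hB' : TotallyBounded ((fun z => Pp (K z (-T))) '' N) := by
      have := (hK (-T) N hNbd).image Pp.uniformContinuous
      rwa [Set.image_image] at this
    obtain ⟨t1, ht1fin, ht1cov⟩ :=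
      (Metric.totallyBounded_iff.1 hB') (ε/8) (by positivity)
    obtain ⟨t2, ht2fin, ht2cov⟩ :=
      (Metric.totallyBounded_iff.1 hA') (ε/8) (by positivity)
    set m : ℕ := ⌈T⌉₊ + 1 with hm
    -- the key estimate for large n
    have key : ∀ n : ℕ, m ≤ n →
        ∃ b ∈ (fun z => Pp (K z (-T))) '' N, ∃ a ∈ (fun z => Pn (K z T)) '' N,
          dist (x n) (b + a) ≤ ε/2 := by
      intro n hn
      have hTn : T < (n:ℝ) := by
        have h1 : T ≤ (⌈T⌉₊ : ℝ) := Nat.le_ceil T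
        have h2 : (⌈T⌉₊ : ℝ) < (n:ℝ) := by
          exact_mod_cast Nat.lt_of_lt_of_le (Nat.lt_succ_self _) hn
        linarith
      have hyN : φ (x n) (-T) ∈ N := hx n (-T) ⟨by linarith, by linarith⟩
      have hzN : φ (x n) T ∈ N := hx n T ⟨by linarith, by linarith⟩
      set y := φ (x n) (-T) with hy
      set z := φ (x n) T with hz
      have hxy : x n = NormedSpace.exp (T • L') y + K y T := by
        have h1 : φ y T = x n := by
          rw [hy, hφadd]
          simp [hφ0]
        rw [← h1, hφ]
      have hxz : x n = NormedSpace.exp ((-T) • L') z + K z (-T) := by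
        have h1 : φ z (-T) = x n := by
          rw [hz, hφadd]
          simp [hφ0]
        rw [← h1, hφ]
      have hesplit : ∀ (t : ℝ) (v : E), NormedSpace.exp (t • L') v =
          NormedSpace.exp (t • L') (Pp v) + NormedSpace.exp (t • L') (Pn v) := by
        intro t v
        rw [← map_add, hsplit]
      have hPn_xn : Pn (x n) = NormedSpace.exp (T • L') (Pn y) + Pn (K y T) := by
        rw [hxy, map_add]
        congr 1
        rw [hesplit T y]
        exact hPnapply _ (hexpPos T _ (hPpmem y)) _ (hexpNeg T _ (hPnmem y))
      have hPp_xn : Pp (x n) = NormedSpace.exp ((-T) • L') (Pp z) + Pp (K z (-T)) := by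
        rw [hxz, map_add]
        congr 1
        rw [hesplit (-T) z]
        exact hPpapply _ (hexpPos (-T) _ (hPpmem z)) _ (hexpNeg (-T) _ (hPnmem z))
      have hny : ‖NormedSpace.exp (T • L') (Pn y)‖ ≤ s / c T := by
        set w := NormedSpace.exp (T • L') (Pn y) with hw
        have hwmem : w ∈ Eposᗮ := hexpNeg T _ (hPnmem y)
        have hest := hexpneg T hTpos w hwmem
        rw [hw, hinv1 T (Pn y)] at hest
        have hPny : ‖Pn y‖ ≤ s := le_trans (hPnnorm y) (hnormN y hyN)
        rw [le_div_iff₀ hcTpos, mul_comm]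
        exact le_trans hest hPny
      have hpz : ‖NormedSpace.exp ((-T) • L') (Pp z)‖ ≤ s / c T := by
        set w := NormedSpace.exp ((-T) • L') (Pp z) with hw
        have hwmem : w ∈ Epos := hexpPos (-T) _ (hPpmem z)
        have hest := hexp T hTpos w hwmem
        rw [hw, hinv2 T (Pp z)] at hest
        have hPpz : ‖Pp z‖ ≤ s := le_trans (hPpnorm z) (hnormN z hzN)
        rw [le_div_iff₀ hcTpos, mul_comm]
        exact le_trans hest hPpz
      refine ⟨Pp (K z (-T)), Set.mem_image_of_mem _ hzN,
        Pn (K y T), Set.mem_image_of_mem _ hyN, ?_⟩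
      have hdiff : x n - (Pp (K z (-T)) + Pn (K y T)) =
          NormedSpace.exp ((-T) • L') (Pp z) + NormedSpace.exp (T • L') (Pn y) := by
        have hxsplit := hsplit (x n)
        rw [hPp_xn, hPn_xn] at hxsplit
        rw [← hxsplit]
        abel
      rw [dist_eq_norm, hdiff]
      calc ‖NormedSpace.exp ((-T) • L') (Pp z) + NormedSpace.exp (T • L') (Pn y)‖
          ≤ ‖NormedSpace.exp ((-T) • L') (Pp z)‖ + ‖NormedSpace.exp (T • L') (Pn y)‖ :=
            norm_add_le _ _
        _ ≤ s / c T + s / c T := add_le_add hpz hny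
        _ ≤ ε/4 + ε/4 := add_le_add hsc hsc
        _ = ε/2 := by ring
    -- assemble the finite ε-net
    refine ⟨(Set.image2 (· + ·) t1 t2) ∪ (x '' (Set.Iio m)),
      (ht1fin.image2 _ ht2fin).union ((Set.finite_Iio m).image x), ?_⟩
    rintro _ ⟨n, rfl⟩
    by_cases hn : n < m
    · exact Set.mem_biUnion (Set.mem_union_right _ (Set.mem_image_of_mem x hn))
        (mem_ball_self hε)
    · push_neg at hn
      obtain ⟨b, hb, a, ha, hd⟩ := key n hn
      obtain ⟨b0, hb0t, hb0⟩ := Set.mem_iUnion₂.1 (ht1cov hb)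
      obtain ⟨a0, ha0t, ha0⟩ := Set.mem_iUnion₂.1 (ht2cov ha)
      refine Set.mem_biUnion (Set.mem_union_left _ (Set.mem_image2_of_mem hb0t ha0t)) ?_
      have hd2 : dist (b + a) (b0 + a0) ≤ dist b b0 + dist a a0 := dist_add_add_le _ _ _ _
      have : dist (x n) (b0 + a0) ≤ dist (x n) (b + a) + dist (b + a) (b0 + a0) :=
        dist_triangle _ _ _
      have hb0' : dist b b0 < ε/8 := mem_ball.1 hb0
      have ha0' : dist a a0 < ε/8 := mem_ball.1 ha0
      rw [mem_ball]
      calc dist (x n) (b0 + a0) ≤ dist (x n) (b + a) + (dist b b0 + dist a a0) :=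
            le_trans this (by linarith)
        _ < ε/2 + (ε/8 + ε/8) := by linarith
        _ ≤ ε := by linarith
  -- conclude via compactness of the closure
  have hcomp : IsCompact (closure (Set.range x)) :=
    hTB.closure.isCompact_of_isClosed isClosed_closure
  obtain ⟨a, -, g, hg, hga⟩ :=
    hcomp.tendsto_subseq (fun n => subset_closure (Set.mem_range_self n))
  exact ⟨g, a, hg, hga⟩
end

section
/- With notation as above, let N̂ be a closed bounded subset of E such that no full backward orbit stays in N̂, i.e. there is no point x₀ ∈ N̂ with x₀·(−∞,0] ⊂ N̂. Then there exists T₁ > 0 such that for every x ∈ N̂ there is t ∈ [0, T₁] with x·(−t) ∉ N̂. -/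
open Set Filter Topology Metric

/-- For the flow `φ` (of the form `e^{tL} + compact`, encoded by the
compactness property `hcpt` from the context), if `N̂` is closed and bounded and no
full backward orbit stays in `N̂`, then there is a uniform `T₁ > 0` such that every
point of `N̂` leaves `N̂` in backward time at most `T₁`. -/
theorem stmt_1 {E : Type*} [NormedAddCommGroup E] [InnerProductSpace ℝ E] [CompleteSpace E]
    (φ : E → ℝ → E)
    (hφ0 : ∀ x, φ x 0 = x)
    (hφadd : ∀ x s t, φ (φ x s) t = φ x (s + t))
    (hφcont : Continuous fun p : E × ℝ => φ p.1 p.2)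
    (Nhat : Set E) (hNc : IsClosed Nhat) (hNb : Bornology.IsBounded Nhat)
    -- compactness property of the flow (consequence of the form e^{tL} + compact):
    (hcpt : ∀ x : ℕ → E, (∀ n, x n ∈ Nhat) →
      (∀ n : ℕ, ∀ t ∈ Ioo (-(n:ℝ)) (n:ℝ), φ (x n) t ∈ Nhat) →
      ∃ (g : ℕ → ℕ) (y : E), StrictMono g ∧ Tendsto (x ∘ g) atTop (𝓝 y) ∧
        y ∈ Nhat ∧ ∀ t : ℝ, φ y t ∈ Nhat)
    -- no full backward orbit stays in N̂:
    (hnoback : ¬ ∃ x₀ ∈ Nhat, ∀ t ≤ (0:ℝ), φ x₀ t ∈ Nhat) :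
    ∃ T₁ > (0:ℝ), ∀ x ∈ Nhat, ∃ t ∈ Icc (0:ℝ) T₁, φ x (-t) ∉ Nhat := by
  by_contra hcon
  push_neg at hcon
  have hx : ∀ n : ℕ, ∃ x ∈ Nhat, ∀ t ∈ Icc (0:ℝ) (2*(n:ℝ)+1), φ x (-t) ∈ Nhat := by
    intro n
    exact hcon (2*(n:ℝ)+1) (by positivity)
  choose x hxN hxb using hx
  set y : ℕ → E := fun n => φ (x n) (-(n:ℝ)) with hy
  have hyN : ∀ n, y n ∈ Nhat := by
    intro n
    exact hxb n n ⟨(Nat.cast_nonneg n : (0:ℝ) ≤ n), by nlinarith [(Nat.cast_nonneg n : (0:ℝ) ≤ n)]⟩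
  have hyorb : ∀ n : ℕ, ∀ t ∈ Ioo (-(n:ℝ)) (n:ℝ), φ (y n) t ∈ Nhat := by
    intro n t ht
    have heq : φ (y n) t = φ (x n) (-((n:ℝ) - t)) := by
      rw [hy, hφadd]; ring_nf
    rw [heq]
    exact hxb n _ ⟨by linarith [ht.2], by linarith [ht.1, (Nat.cast_nonneg n : (0:ℝ) ≤ n)]⟩
  obtain ⟨g, z, -, -, hzN, hzorb⟩ := hcpt y hyN hyorb
  exact hnoback ⟨z, hzN, fun t _ => hzorb t⟩
end

section
/- Let U be a closed bounded isolating neighborhood for the flow, i.e. Inv(U) ⊂ int U, where the flow has the compactness property that any sequence (x_n) ⊂ U with x_n·(−n,n) ⊂ U has a subsequence converging to a point of Inv(U). Define G^T(U) = ⋂_{|t| ≤ T} U·(−t,t) (equivalently, the set of x with x·[−T,T] ⊂ U). Then there exists T > 0 such that G^T(U) ⊂ int U. -/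
open Set Filter Topology Metric

/-- If `U` is a closed bounded isolating neighborhood (`Inv(U) ⊆ int U`)
for a flow with the stated compactness property, then there exists `T > 0` with
`G^T(U) = {x : x·[−T,T] ⊆ U} ⊆ int U`. -/
theorem stmt_2 {E : Type*} [NormedAddCommGroup E] [InnerProductSpace ℝ E] [CompleteSpace E]
    (φ : E → ℝ → E)
    (hφ0 : ∀ x, φ x 0 = x)
    (hφadd : ∀ x s t, φ (φ x s) t = φ x (s + t))
    (hφcont : Continuous fun p : E × ℝ => φ p.1 p.2)
    (U : Set E) (hUc : IsClosed U) (hUb : Bornology.IsBounded U)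
    -- U is an isolating neighborhood: Inv(U) ⊆ int U
    (hiso : {x ∈ U | ∀ t : ℝ, φ x t ∈ U} ⊆ interior U)
    -- compactness property: subsequences converge to points of Inv(U)
    (hcpt : ∀ x : ℕ → E, (∀ n, x n ∈ U) →
      (∀ n : ℕ, ∀ t ∈ Ioo (-(n:ℝ)) (n:ℝ), φ (x n) t ∈ U) →
      ∃ (g : ℕ → ℕ) (y : E), StrictMono g ∧ Tendsto (x ∘ g) atTop (𝓝 y) ∧
        y ∈ U ∧ ∀ t : ℝ, φ y t ∈ U) :
    ∃ T > (0:ℝ), {x : E | ∀ t ∈ Icc (-T) T, φ x t ∈ U} ⊆ interior U := by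
  by_contra h
  push_neg at h
  -- For each n, get x n with x n ∉ interior U but φ (x n) t ∈ U for t ∈ [-(n+1), n+1]
  have hx : ∀ n : ℕ, ∃ x : E, (∀ t ∈ Icc (-((n:ℝ)+1)) ((n:ℝ)+1), φ x t ∈ U) ∧
      x ∉ interior U := by
    intro n
    have := h ((n:ℝ)+1) (by positivity)
    rw [not_subset] at this
    obtain ⟨x, hx1, hx2⟩ := this
    exact ⟨x, hx1, hx2⟩
  choose x hx1 hx2 using hx
  have hxU : ∀ n, x n ∈ U := by
    intro n
    have := hx1 n 0 ⟨by linarith [Nat.cast_nonneg (α := ℝ) n], by positivity⟩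
    rwa [hφ0] at this
  have hxI : ∀ n : ℕ, ∀ t ∈ Ioo (-(n:ℝ)) (n:ℝ), φ (x n) t ∈ U := by
    intro n t ht
    exact hx1 n t ⟨by linarith [ht.1], by linarith [ht.2]⟩
  obtain ⟨g, y, hg, hty, hyU, hyI⟩ := hcpt x hxU hxI
  have hyint : y ∈ interior U := hiso ⟨hyU, hyI⟩
  have hclosed : IsClosed (interior U)ᶜ := isOpen_interior.isClosed_compl
  have : y ∈ (interior U)ᶜ :=
    hclosed.mem_of_tendsto hty (Eventually.of_forall fun n => hx2 (g n))
  exact this hyint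
end

section
/- Let M be a compact C¹ submanifold of a real Hilbert space E. Then there exists a finite-dimensional linear subspace T ⊂ E such that the orthogonal projection P_T : E → T restricts to an injective immersion (hence a diffeomorphism onto its image) on M. -/
open Set Function Filter Topology

noncomputable section
set_option linter.unusedSectionVars false
variable {E : Type*} [NormedAddCommGroup E] [InnerProductSpace ℝ E] [CompleteSpace E]
variable {F : Type*} [NormedAddCommGroup F] [NormedSpace ℝ F]
variable {M : Type*} [TopologicalSpace M] [ChartedSpace F M]

local notation "I" => modelWithCornersSelf ℝ F
local notation "J" => modelWithCornersSelf ℝ E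

theorem bridge {f : M → E} {z : M} (hf : ContMDiffAt I J 1 f z) :
    HasFDerivAt (f ∘ (extChartAt I z).symm) (mfderiv I J f z) ((extChartAt I z) z) ∧
    ContDiffAt ℝ 1 (f ∘ (extChartAt I z).symm) ((extChartAt I z) z) := by
  have h := (contMDiffAt_iff.1 hf).2
  simp only [extChartAt_model_space_eq_id, PartialEquiv.refl_coe, CompTriple.comp_eq,
    modelWithCornersSelf_coe, range_id, contDiffWithinAt_univ, id_eq] at h
  have hmd : MDifferentiableAt I J f z := hf.mdifferentiableAt one_ne_zero
  have heq : mfderiv I J f z = fderiv ℝ (f ∘ (extChartAt I z).symm) ((extChartAt I z) z) := by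
    rw [hmd.mfderiv]
    simp only [writtenInExtChartAt, extChartAt_model_space_eq_id, PartialEquiv.refl_coe,
      CompTriple.comp_eq, modelWithCornersSelf_coe, range_id, fderivWithin_univ, id_eq]
    rfl
  refine ⟨?_, h⟩
  rw [heq]
  exact (h.differentiableAt one_ne_zero).hasFDerivAt

theorem key [FiniteDimensional ℝ F] {f : M → E} {z : M} (hfz : ContMDiffAt I J 1 f z)
    (Q : E →L[ℝ] E) (hQ1 : ∀ x : E, ‖Q x‖ ≤ ‖x‖)
    (hQA : ∀ v : F, Q (mfderiv I J f z v) = mfderiv I J f z v)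
    (hinj : Function.Injective (mfderiv I J f z)) :
    ∃ U : Set M, IsOpen U ∧ z ∈ U ∧ ∀ a ∈ U, ∀ b ∈ U,
      (1/2 : ℝ) * ‖f a - f b‖ ≤ ‖Q (f a - f b)‖ := by
  obtain ⟨hder, hcd⟩ := bridge hfz
  set c := extChartAt I z with hc
  set p₀ := c z with hp₀
  set g : F → E := f ∘ c.symm with hg
  set A : F →L[ℝ] E := mfderiv I J f z with hA
  -- antilipschitz constant
  obtain ⟨K, K0, hK⟩ := (A : F →ₗ[ℝ] E).exists_antilipschitzWith (LinearMap.ker_eq_bot.2 hinj)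
  have hKv : ∀ v : F, ‖v‖ ≤ K * ‖A v‖ := by
    intro v
    have := hK.le_mul_dist v 0
    simpa [dist_eq_norm] using this
  set ε : ℝ := 1 / (4 * (K + 1)) with hε
  have hεpos : 0 < ε := by positivity
  have hεK : ε * K ≤ 1/4 := by
    rw [hε, div_mul_eq_mul_div, one_mul, div_le_div_iff₀ (by positivity) (by norm_num)]
    nlinarith [K.coe_nonneg]
  -- a C¹ neighborhood
  obtain ⟨u, hu, hcu⟩ := hcd.contDiffOn le_rfl (by simp)
  have hu' : IsOpen (interior u) := isOpen_interior
  have hcu' : ContDiffOn ℝ 1 g (interior u) := hcu.mono interior_subset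
  have hfd : ∀ ξ ∈ interior u, HasFDerivAt g (fderiv ℝ g ξ) ξ := fun ξ hξ =>
    ((hcu'.differentiableOn one_ne_zero ξ hξ).differentiableAt (hu'.mem_nhds hξ)).hasFDerivAt
  have hcont : ContinuousOn (fderiv ℝ g) (interior u) :=
    hcu'.continuousOn_fderiv_of_isOpen hu' le_rfl
  have hp₀u : p₀ ∈ interior u := mem_interior_iff_mem_nhds.2 hu
  have hAg : fderiv ℝ g p₀ = A := (show HasFDerivAt g A p₀ from hder).fderiv
  -- eventually the derivative is ε-close to A
  have hev : ∀ᶠ ξ in 𝓝 p₀, ‖fderiv ℝ g ξ - A‖ < ε := by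
    have ht : Tendsto (fderiv ℝ g) (𝓝 p₀) (𝓝 A) := by
      rw [← hAg]
      exact (hcont.continuousAt (hu'.mem_nhds hp₀u)).tendsto
    have := ht (Metric.ball_mem_nhds A hεpos)
    filter_upwards [this] with ξ hξ
    simpa [dist_eq_norm] using hξ
  have htarget : c.target ∈ 𝓝 p₀ := by
    exact (isOpen_extChartAt_target z).mem_nhds (mem_extChartAt_target z)
  obtain ⟨r, hrpos, hball⟩ := Metric.mem_nhds_iff.1
    (inter_mem (inter_mem (hu'.mem_nhds hp₀u) htarget) hev)
  set B := Metric.ball p₀ r with hB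
  have hBu : B ⊆ interior u := fun ξ hξ => ((hball hξ).1).1
  have hBt : B ⊆ c.target := fun ξ hξ => ((hball hξ).1).2
  have hBε : ∀ ξ ∈ B, ‖fderiv ℝ g ξ - A‖ ≤ ε := fun ξ hξ => le_of_lt (hball hξ).2
  -- mean value estimate on B
  have hmvt : ∀ α ∈ B, ∀ β ∈ B, ‖(g α - g β) - A (α - β)‖ ≤ ε * ‖α - β‖ := by
    intro α hα β hβ
    have h1 : ∀ ξ ∈ B, HasFDerivWithinAt (fun ξ => g ξ - A ξ) (fderiv ℝ g ξ - A) B ξ :=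
      fun ξ hξ => ((hfd ξ (hBu hξ)).sub (A.hasFDerivAt)).hasFDerivWithinAt
    have := (convex_ball p₀ r).norm_image_sub_le_of_norm_hasFDerivWithin_le h1 hBε hβ hα
    simpa [map_sub, sub_sub_sub_comm] using this
  -- the neighborhood in M
  refine ⟨c.source ∩ (fun m => c m) ⁻¹' B, ?_, ?_, ?_⟩
  · exact (continuousOn_extChartAt z).isOpen_inter_preimage (isOpen_extChartAt_source z)
      Metric.isOpen_ball
  · exact ⟨mem_extChartAt_source z, Metric.mem_ball_self hrpos⟩
  · rintro a ⟨haso, haB⟩ b ⟨hbso, hbB⟩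
    set α := c a with hα
    set β := c b with hβ
    have hga : g α = f a := by simp [hg, hα, c.left_inv haso]
    have hgb : g β = f b := by simp [hg, hβ, c.left_inv hbso]
    have hmv := hmvt α haB β hbB
    rw [hga, hgb] at hmv
    have h1 : ‖α - β‖ ≤ K * ‖A (α - β)‖ := hKv _
    have hQv : ‖Q (A (α - β))‖ = ‖A (α - β)‖ := congrArg (fun x : E => ‖x‖) (hQA (α - β))
    have h2 : ε * ‖α - β‖ ≤ (1/4 : ℝ) * ‖A (α - β)‖ := by
      calc ε * ‖α - β‖ ≤ ε * (K * ‖A (α - β)‖) :=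
            mul_le_mul_of_nonneg_left h1 hεpos.le
        _ = (ε * K) * ‖A (α - β)‖ := by ring
        _ ≤ (1/4 : ℝ) * ‖A (α - β)‖ := mul_le_mul_of_nonneg_right hεK (norm_nonneg _)
    have h3 : ‖Q ((f a - f b) - A (α - β))‖ ≤ ε * ‖α - β‖ :=
      le_trans (hQ1 _) hmv
    have h4 : ‖f a - f b‖ ≤ ‖A (α - β)‖ + ε * ‖α - β‖ := by
      have h4' : ‖f a - f b‖ ≤ ‖A (α - β)‖ + ‖f a - f b - A (α - β)‖ := by
        calc ‖f a - f b‖ = ‖A (α - β) + (f a - f b - A (α - β))‖ := by congr 1; abel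
          _ ≤ _ := norm_add_le _ _
      linarith [hmv]
    have h5 : ‖Q (A (α - β))‖ ≤ ‖Q (f a - f b)‖ + ‖Q (f a - f b - A (α - β))‖ := by
      calc ‖Q (A (α - β))‖ = ‖Q (f a - f b) - Q (f a - f b - A (α - β))‖ := by
            rw [← map_sub]
            exact congrArg (fun t : E => ‖Q t‖)
              (by abel : A (α - β) = (f a - f b) - (f a - f b - A (α - β)))
        _ ≤ _ := norm_sub_le _ _
    linarith [norm_nonneg (A (α - β))]

theorem limit {f : M → E} {z : M} (hfz : ContMDiffAt I J 1 f z)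
    (Q : E →L[ℝ] E) {κ : ℝ} {U : Set M} (hU : IsOpen U) (hzU : z ∈ U)
    (hest : ∀ a ∈ U, ∀ b ∈ U, κ * ‖f a - f b‖ ≤ ‖Q (f a - f b)‖)
    (v : F) {u : E} (hu : u = mfderiv I J f z v) : κ * ‖u‖ ≤ ‖Q u‖ := by
  subst hu
  obtain ⟨hder, -⟩ := bridge hfz
  set c := extChartAt I z with hc
  set p₀ := c z with hp₀
  set g : F → E := f ∘ c.symm with hg
  set A : F →L[ℝ] E := mfderiv I J f z with hA
  have hnc : Tendsto (fun n : ℕ => ‖(n : ℝ)‖) atTop atTop := by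
    simpa [Real.norm_natCast] using tendsto_natCast_atTop_atTop (R := ℝ)
  have hlim := (show HasFDerivAt g A p₀ from hder).lim v hnc
  set w : ℕ → E := fun n => (n : ℝ) • (g (p₀ + ((n : ℝ))⁻¹ • v) - g p₀) with hw
  have hqtend : Tendsto (fun n : ℕ => p₀ + ((n : ℝ))⁻¹ • v) atTop (𝓝 p₀) := by
    have h0 : Tendsto (fun n : ℕ => ((n : ℝ))⁻¹) atTop (𝓝 (0 : ℝ)) :=
      tendsto_inv_atTop_zero.comp (tendsto_natCast_atTop_atTop (R := ℝ))
    have : Tendsto (fun n : ℕ => ((n : ℝ))⁻¹ • v) atTop (𝓝 (0 : F)) := by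
      simpa using h0.smul_const v
    simpa using tendsto_const_nhds.add this
  have hzsymm : c.symm p₀ = z := (extChartAt I z).left_inv (mem_extChartAt_source z)
  have hsymm_tend : Tendsto (fun n : ℕ => c.symm (p₀ + ((n : ℝ))⁻¹ • v)) atTop (𝓝 z) := by
    have hcont : ContinuousAt c.symm p₀ := continuousAt_extChartAt_symm z
    have := hcont.tendsto.comp hqtend
    rwa [hzsymm] at this
  have hevU : ∀ᶠ n : ℕ in atTop, c.symm (p₀ + ((n : ℝ))⁻¹ • v) ∈ U :=
    hsymm_tend (hU.mem_nhds hzU)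
  have hineq : ∀ᶠ n : ℕ in atTop, κ * ‖w n‖ ≤ ‖Q (w n)‖ := by
    filter_upwards [hevU] with n hn
    have hfa : g (p₀ + ((n : ℝ))⁻¹ • v) = f (c.symm (p₀ + ((n : ℝ))⁻¹ • v)) := rfl
    have hfz' : g p₀ = f z := by rw [hg]; simp [hzsymm]
    have hbase := hest _ hn z hzU
    have hn0 : (0 : ℝ) ≤ (n : ℝ) := Nat.cast_nonneg n
    rw [hw]
    simp only [hfa, hfz']
    rw [map_smul, norm_smul, norm_smul, Real.norm_natCast]
    calc κ * ((n : ℝ) * ‖f (c.symm (p₀ + ((n : ℝ))⁻¹ • v)) - f z‖)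
        = (n : ℝ) * (κ * ‖f (c.symm (p₀ + ((n : ℝ))⁻¹ • v)) - f z‖) := by ring
      _ ≤ (n : ℝ) * ‖Q (f (c.symm (p₀ + ((n : ℝ))⁻¹ • v)) - f z)‖ :=
          mul_le_mul_of_nonneg_left hbase hn0
  have hf1 : Tendsto (fun n : ℕ => κ * ‖w n‖) atTop (𝓝 (κ * ‖A v‖)) :=
    (hlim.norm).const_mul κ
  have hf2 : Tendsto (fun n : ℕ => ‖Q (w n)‖) atTop (𝓝 (‖Q (A v)‖)) :=
    ((Q.continuous.tendsto _).comp hlim).norm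
  exact le_of_tendsto_of_tendsto hf1 hf2 hineq

theorem proj_norm_le (T : Submodule ℝ E) [Submodule.HasOrthogonalProjection T] (x : E) :
    ‖(T.subtypeL ∘L Submodule.orthogonalProjectionOnto T) x‖ ≤ ‖x‖ := by
  have h1 : ‖(T.subtypeL ∘L Submodule.orthogonalProjectionOnto T) x‖ = ‖Submodule.orthogonalProjectionOnto T x‖ := rfl
  rw [h1]
  calc ‖Submodule.orthogonalProjectionOnto T x‖ ≤ ‖Submodule.orthogonalProjectionOnto T‖ * ‖x‖ :=
        (Submodule.orthogonalProjectionOnto T).le_opNorm x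
    _ ≤ 1 * ‖x‖ := mul_le_mul_of_nonneg_right (Submodule.orthogonalProjectionOnto_norm_le T) (norm_nonneg x)
    _ = ‖x‖ := one_mul _

theorem proj_id (T : Submodule ℝ E) [Submodule.HasOrthogonalProjection T] {x : E} (hx : x ∈ T) :
    (T.subtypeL ∘L Submodule.orthogonalProjectionOnto T) x = x := by
  simpa using congrArg Subtype.val (Submodule.orthogonalProjectionOnto_mem_subspace_eq_self (⟨x, hx⟩ : T))

theorem proj_zero' (T : Submodule ℝ E) [Submodule.HasOrthogonalProjection T] {x : E} (hx : x ∈ Tᗮ) :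
    (T.subtypeL ∘L Submodule.orthogonalProjectionOnto T) x = 0 := by
  simpa using congrArg Subtype.val
    (Submodule.orthogonalProjectionOnto_apply_of_mem_orthogonal hx)

theorem mem_orthogonal_of_proj_zero (T : Submodule ℝ E) [Submodule.HasOrthogonalProjection T] {x : E}
    (h : (T.subtypeL ∘L Submodule.orthogonalProjectionOnto T) x = 0) : x ∈ Tᗮ := by
  have h2 := Submodule.sub_starProjection_mem_orthogonal (K := T) x
  have h' : (↑(Submodule.orthogonalProjectionOnto T x) : E) = 0 := h
  rwa [Submodule.starProjection_apply, h', sub_zero] at h2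

theorem findimF {M : Type*} [TopologicalSpace M] [CompactSpace M] [T2Space M] [ChartedSpace F M]
    [Nonempty M] : FiniteDimensional ℝ F := by
  have z : M := Classical.arbitrary M
  set c := chartAt F z with hc
  haveI : LocallyCompactSpace c.source := c.open_source.locallyCompactSpace
  haveI : LocallyCompactSpace c.target :=
    (Homeomorph.locallyCompactSpace_iff c.toHomeomorphSourceTarget).1 inferInstance
  set pt : c.target := ⟨c z, c.map_source (mem_chart_source F z)⟩ with hpt
  obtain ⟨K, hKc, hKn⟩ := exists_compact_mem_nhds pt
  have hKc' : IsCompact (Subtype.val '' K : Set F) := hKc.image continuous_subtype_val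
  have hKn' : (Subtype.val '' K : Set F) ∈ 𝓝 (c z) := by
    have := c.open_target.isOpenEmbedding_subtypeVal.map_nhds_eq pt
    rw [← this]
    exact image_mem_map hKn
  haveI : LocallyCompactSpace F :=
    hKc'.locallyCompactSpace_of_mem_nhds_of_addGroup hKn'
  exact FiniteDimensional.of_locallyCompactSpace ℝ

end

open RealInnerProductSpace

/-- Let `M` be a compact `C¹` submanifold of a real Hilbert space `E`
(encoded as the image of a `C¹` embedding `f` of a compact `C¹` manifold `M` which is
an immersion). Then there is a finite-dimensional subspace `T ⊆ E` such that the
orthogonal projection `P` onto `T` restricts to an injective immersion on `M`. -/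
theorem stmt_5 {E : Type*} [NormedAddCommGroup E] [InnerProductSpace ℝ E] [CompleteSpace E]
    {F : Type*} [NormedAddCommGroup F] [NormedSpace ℝ F]
    {M : Type*} [TopologicalSpace M] [CompactSpace M] [ChartedSpace F M]
    (f : M → E)
    (hf : ContMDiff (modelWithCornersSelf ℝ F) (modelWithCornersSelf ℝ E) 1 f)
    (hemb : Topology.IsEmbedding f)
    (himm : ∀ x : M, Function.Injective
      (mfderiv (modelWithCornersSelf ℝ F) (modelWithCornersSelf ℝ E) f x)) :
    ∃ (T : Submodule ℝ E) (P : E →L[ℝ] E),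
      FiniteDimensional ℝ T ∧
      -- P is the orthogonal projection of E onto T
      (∀ v, P v ∈ T) ∧ (∀ v ∈ T, P v = v) ∧ (∀ v w : E, ⟪P v, w⟫ = ⟪v, P w⟫) ∧
      -- P restricted to M is injective ...
      Function.Injective (fun m : M => P (f m)) ∧
      -- ... and an immersion
      ∀ x : M, Function.Injective (fun v : F => P
        (mfderiv (modelWithCornersSelf ℝ F) (modelWithCornersSelf ℝ E) f x v)) := by
  classical
  rcases isEmpty_or_nonempty M with h | hne
  · refine ⟨⊥, 0, inferInstance, fun v => by simp, fun v hv => by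
      simpa using ((Submodule.mem_bot ℝ).1 hv).symm, fun v w => by simp,
      fun a b _ => Subsingleton.elim a b, fun x => (h.elim x)⟩
  · haveI := hne
    haveI : T2Space M := hemb.t2Space
    haveI : FiniteDimensional ℝ F := findimF (F := F) (M := M)
    have hfc : Continuous f := hemb.continuous
    set 𝓘F := modelWithCornersSelf ℝ F
    set 𝓘E := modelWithCornersSelf ℝ E
    set A : ∀ _ : M, F →L[ℝ] E := fun z => mfderiv 𝓘F 𝓘E f z with hA
    set R : M → Submodule ℝ E := fun z => LinearMap.range (A z : F →ₗ[ℝ] E) with hR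
    -- local estimate neighborhoods
    have hloc : ∀ z : M, ∃ U : Set M, IsOpen U ∧ z ∈ U ∧ ∀ a ∈ U, ∀ b ∈ U,
        (1/2:ℝ) * ‖f a - f b‖ ≤ ‖((R z).subtypeL ∘L Submodule.orthogonalProjectionOnto (R z)) (f a - f b)‖ := by
      intro z
      refine key (hf z) _ (proj_norm_le _) (fun v => ?_) (himm z)
      exact proj_id (R z) (LinearMap.mem_range.2 ⟨v, rfl⟩)
    choose U hUopen hUmem hUest using hloc
    obtain ⟨s, hs⟩ := isCompact_univ.elim_finite_subcover U hUopen
      (fun x _ => mem_iUnion.2 ⟨x, hUmem x⟩)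
    have hcov : ∀ x : M, ∃ z ∈ s, x ∈ U z := by
      intro x
      have := hs (mem_univ x)
      simpa using this
    set T₀ : Submodule ℝ E := s.sup R with hT₀
    haveI : FiniteDimensional ℝ T₀ := Submodule.finiteDimensional_finset_sup s R
    -- global separation on the complement of the diagonal neighborhood
    set V : Set (M × M) := ⋃ z ∈ s, (U z) ×ˢ (U z) with hV
    have hVopen : IsOpen V := isOpen_biUnion fun z _ => (hUopen z).prod (hUopen z)
    set W : Set (M × M) := univ \ V with hW
    have hWcmp : IsCompact W := (isClosed_univ.sdiff hVopen).isCompact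
    have hιne : Nonempty {T : Submodule ℝ E // FiniteDimensional ℝ T} :=
      ⟨⟨⊥, inferInstance⟩⟩
    set t : {T : Submodule ℝ E // FiniteDimensional ℝ T} → Set (M × M) :=
      fun T => {p : M × M | f p.1 - f p.2 ∈ (T.1)ᗮ} with ht
    have htcl : ∀ T, IsClosed (t T) := by
      intro T
      have : t T = (fun p : M × M => f p.1 - f p.2) ⁻¹' ((T.1)ᗮ : Set E) := rfl
      rw [this]
      exact (T.1).isClosed_orthogonal.preimage ((hfc.comp continuous_fst).sub
        (hfc.comp continuous_snd))
    have hdir : Directed (· ⊇ ·) t := by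
      intro T1 T2
      haveI := T1.2
      haveI := T2.2
      refine ⟨⟨T1.1 ⊔ T2.1, Submodule.finiteDimensional_sup _ _⟩, ?_, ?_⟩
      · intro p hp
        exact Submodule.orthogonal_le le_sup_left hp
      · intro p hp
        exact Submodule.orthogonal_le le_sup_right hp
    have hemptyInt : (W ∩ ⋂ T, t T) = ∅ := by
      rw [eq_empty_iff_forall_notMem]
      rintro ⟨a, b⟩ ⟨hpW, hpT⟩
      have hd : f a - f b ∈ (Submodule.span ℝ {f a - f b})ᗮ := by
        have := mem_iInter.1 hpT ⟨Submodule.span ℝ {f a - f b}, inferInstance⟩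
        exact this
      have hd0 : f a - f b = 0 := by
        have := (Submodule.mem_orthogonal _ _).1 hd (f a - f b)
          (Submodule.mem_span_singleton_self _)
        exact inner_self_eq_zero.1 this
      have hab : a = b := hemb.injective (by rwa [sub_eq_zero] at hd0)
      obtain ⟨z, hz, hxz⟩ := hcov a
      exact hpW.2 (mem_biUnion hz ⟨hxz, hab ▸ hxz⟩)
    obtain ⟨T₁, hT₁⟩ := hWcmp.elim_directed_family_closed t htcl hemptyInt hdir
    set T : Submodule ℝ E := T₀ ⊔ T₁.1 with hT
    haveI : FiniteDimensional ℝ T₁.1 := T₁.2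
    haveI : FiniteDimensional ℝ T := Submodule.finiteDimensional_sup T₀ T₁.1
    set P : E →L[ℝ] E := T.subtypeL ∘L Submodule.orthogonalProjectionOnto T with hP
    refine ⟨T, P, inferInstance, fun v => (Submodule.orthogonalProjectionOnto T v).2,
      fun v hv => proj_id T hv, fun v w => Submodule.inner_starProjection_left_eq_right T v w,
      ?_, ?_⟩
    · -- injectivity
      intro a b hab
      simp only at hab
      have hd : f a - f b ∈ Tᗮ := by
        apply mem_orthogonal_of_proj_zero
        rw [map_sub, hab, sub_self]
      by_cases hV' : (a, b) ∈ V
      · obtain ⟨z, haU, hz, hbU⟩ : ∃ z, a ∈ U z ∧ z ∈ s ∧ b ∈ U z := by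
          simpa [hV, Set.mem_iUnion] using hV'
        have hRT : R z ≤ T := le_trans (Finset.le_sup hz) le_sup_left
        have hd' : f a - f b ∈ (R z)ᗮ := Submodule.orthogonal_le hRT hd
        have h0 : ((R z).subtypeL ∘L Submodule.orthogonalProjectionOnto (R z)) (f a - f b) = 0 :=
          proj_zero' _ hd'
        have hest := hUest z a haU b hbU
        rw [h0, norm_zero] at hest
        have : ‖f a - f b‖ ≤ 0 := by linarith
        have : f a - f b = 0 := by
          have := norm_nonneg (f a - f b)
          exact norm_eq_zero.1 (le_antisymm ‹‖f a - f b‖ ≤ 0› this)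
        exact hemb.injective (by rwa [sub_eq_zero] at this)
      · exfalso
        have hpW : (a, b) ∈ W := ⟨mem_univ _, hV'⟩
        have hpt : (a, b) ∈ t T₁ := Submodule.orthogonal_le le_sup_right hd
        rw [eq_empty_iff_forall_notMem] at hT₁
        exact hT₁ (a, b) ⟨hpW, hpt⟩
    · -- immersion
      intro x v₁ v₂ hv
      simp only at hv
      obtain ⟨z, hz, hxU⟩ := hcov x
      have h1 : P (A x v₁) = P (A x v₂) := hv
      have hP0 : P (A x v₁ - A x v₂) = 0 := by rw [map_sub, h1, sub_self]
      have hu2 : A x (v₁ - v₂) = A x v₁ - A x v₂ := map_sub _ _ _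
      have hdT : A x (v₁ - v₂) ∈ Tᗮ :=
        mem_orthogonal_of_proj_zero T (by rw [hu2]; exact hP0)
      have hdR : A x (v₁ - v₂) ∈ (R z)ᗮ :=
        Submodule.orthogonal_le (le_trans (Finset.le_sup hz) le_sup_left) hdT
      have hQ0 : ((R z).subtypeL ∘L Submodule.orthogonalProjectionOnto (R z)) (A x (v₁ - v₂)) = 0 :=
        proj_zero' _ hdR
      have hu' : A x (v₁ - v₂) = mfderiv 𝓘F 𝓘E f x (v₁ - v₂) := rfl
      have hlim := limit (hf x) ((R z).subtypeL ∘L Submodule.orthogonalProjectionOnto (R z))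
        (hUopen z) hxU (hUest z) (v₁ - v₂) hu'
      rw [hQ0, norm_zero] at hlim
      have hu0 : A x (v₁ - v₂) = 0 := by
        have hle : ‖A x (v₁ - v₂)‖ ≤ 0 := by linarith
        exact norm_eq_zero.1 (le_antisymm hle (norm_nonneg _))
      have h2 : mfderiv 𝓘F 𝓘E f x (v₁ - v₂) = mfderiv 𝓘F 𝓘E f x 0 := by
        rw [map_zero]; exact hu0
      have h3 := himm x h2
      have h3 : v₁ - v₂ = 0 := h3
      rw [sub_eq_zero] at h3
      exact h3
end

section
/- Let E be a Hilbert space, L a self-adjoint bounded isomorphism with positive eigenspace E⁺, and suppose |e^{TL}v| ≥ c(T)|v| for v ∈ E⁺ with c(T) → ∞. If (x_n) ⊂ B(0,s) is a sequence whose E⁺-components satisfy |x_n⁺ − x_m⁺| > ε for all n ≠ m, and x_n·T = e^{TL}x_n + K(x_n, T) with x_n·T ∈ B(0,s) for all n, then the set {K(x_n, T) : n ∈ ℕ} is not precompact, provided c(T) > 3s/ε. -/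
open Set Metric RealInnerProductSpace

/-- Let `P` be the orthogonal projection onto the positive spectral
subspace `E⁺` of the self-adjoint isomorphism `L`, `A = e^{TL}` with the expansion
estimate `‖A v‖ ≥ c(T) ‖v‖` on `E⁺`, and `c(T) > 3s/ε`.  If `(xₙ) ⊆ B(0,s)`
satisfies `‖xₙ⁺ − x_m⁺‖ > ε` for `n ≠ m` and `xₙ·T = A xₙ + Kₙ ∈ B(0,s)`, then
`{Kₙ}` is not precompact (indeed `‖Kₙ − K_m‖ > s` for `n ≠ m`). -/
theorem stmt_16 {E : Type*} [NormedAddCommGroup E] [InnerProductSpace ℝ E] [CompleteSpace E]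
    -- P = orthogonal projection onto E⁺
    (P : E →L[ℝ] E)
    (hPidem : ∀ v, P (P v) = P v)
    (hPsa : ∀ v w : E, ⟪P v, w⟫ = ⟪v, P w⟫)
    -- A = e^{TL}, commuting with the spectral projection, expanding on E⁺
    (A : E →L[ℝ] E)
    (hAP : ∀ v, P (A v) = A (P v))
    (cT ε s : ℝ) (hε : 0 < ε) (hs : 0 < s)
    (hexp : ∀ v : E, cT * ‖P v‖ ≤ ‖A (P v)‖)
    (hc : 3 * s / ε < cT)
    -- the sequence and the compact parts K(xₙ, T)
    (x K : ℕ → E)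
    (hx : ∀ n, x n ∈ ball (0:E) s)
    (hsep : ∀ n m : ℕ, n ≠ m → ε < ‖P (x n) - P (x m)‖)
    (hflow : ∀ n, A (x n) + K n ∈ ball (0:E) s) :
    ¬ TotallyBounded (Set.range K) := by

  have hcpos : 0 < cT := lt_trans (by positivity) hc
  have hPnorm : ∀ w : E, ‖P w‖ ≤ ‖w‖ := by
    intro w
    have h1 : ⟪P w, P w⟫ = ⟪w, P w⟫ := by rw [hPsa, hPidem]
    have h2 : ‖P w‖ ^ 2 = ⟪w, P w⟫ := by
      rw [← h1, real_inner_self_eq_norm_sq]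
    have h3 : ⟪w, P w⟫ ≤ ‖w‖ * ‖P w‖ := real_inner_le_norm w (P w)
    nlinarith [norm_nonneg (P w), norm_nonneg w]
  have hK : ∀ n m : ℕ, n ≠ m → s < ‖K n - K m‖ := by
    intro n m hnm
    have key : P (K n - K m) =
        P ((A (x n) + K n) - (A (x m) + K m)) - A (P (x n - x m)) := by
      simp only [map_add, map_sub, hAP]
      abel
    have hA1 : cT * ‖P (x n - x m)‖ ≤ ‖A (P (x n - x m))‖ := hexp _
    have hPd : ‖P (x n - x m)‖ = ‖P (x n) - P (x m)‖ := by rw [map_sub]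
    have hsepnm := hsep n m hnm
    have hAbig : 3 * s < ‖A (P (x n - x m))‖ := by
      have h4 : cT * ε < cT * ‖P (x n - x m)‖ := by
        rw [hPd]; exact (mul_lt_mul_iff_right₀ hcpos).2 hsepnm
      have h5 : 3 * s < cT * ε := by
        have := (div_lt_iff₀ hε).1 hc
        linarith
      linarith
    have hy : ‖(A (x n) + K n) - (A (x m) + K m)‖ < 2 * s := by
      have h1 := mem_ball_zero_iff.1 (hflow n)
      have h2 := mem_ball_zero_iff.1 (hflow m)
      calc ‖(A (x n) + K n) - (A (x m) + K m)‖
          ≤ ‖A (x n) + K n‖ + ‖A (x m) + K m‖ := norm_sub_le _ _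
        _ < 2 * s := by linarith
    have hPy : ‖P ((A (x n) + K n) - (A (x m) + K m))‖ < 2 * s :=
      lt_of_le_of_lt (hPnorm _) hy
    have hlow : s < ‖P (K n - K m)‖ := by
      rw [key]
      have := norm_sub_norm_le (A (P (x n - x m)))
        (P ((A (x n) + K n) - (A (x m) + K m)))
      have habs : ‖A (P (x n - x m)) - P ((A (x n) + K n) - (A (x m) + K m))‖
          = ‖P ((A (x n) + K n) - (A (x m) + K m)) - A (P (x n - x m))‖ :=
        norm_sub_rev _ _
      linarith
    exact lt_of_lt_of_le hlow (hPnorm _)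
  intro ht
  obtain ⟨t, htfin, htsub⟩ := (Metric.totallyBounded_iff).1 ht (s/2) (by positivity)
  have hmem : ∀ n, ∃ y ∈ t, K n ∈ ball y (s/2) := by
    intro n
    have := htsub (mem_range_self n)
    simpa using this
  choose g hgt hgb using hmem
  haveI : Finite t := htfin.to_subtype
  obtain ⟨n, m, hnm, heq⟩ :=
    Finite.exists_ne_map_eq_of_infinite (fun n : ℕ => (⟨g n, hgt n⟩ : t))
  have heq' : g n = g m := congrArg Subtype.val heq
  have d1 : dist (K n) (g n) < s/2 := mem_ball.1 (hgb n)
  have d2 : dist (K m) (g m) < s/2 := mem_ball.1 (hgb m)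
  have : dist (K n) (K m) < s := by
    calc dist (K n) (K m) ≤ dist (K n) (g n) + dist (g m) (K m) := by
          rw [heq']; exact dist_triangle _ _ _
      _ < s := by rw [dist_comm] at d2; linarith
  have := hK n m hnm
  rw [dist_eq_norm] at *
  linarith
end

section
/- Let f : E → ℝ be C² of the form f(x) = ½⟨Lx,x⟩ + b(x) with L a self-adjoint isomorphism and D²b(x) compact for every x. Then for every x ∈ E, the Hessian D²f(x) = L + D²b(x) is a self-adjoint Fredholm operator of index 0; in particular, if x is a non-degenerate critical point, D²f(x) is an isomorphism and its negative eigenspace V satisfies: V ∩ E⁺ is finite-dimensional and V^⊥ ∩ E⁻ is finite-dimensional, so the relative index eind(x) = dim(V ∩ E⁺) − dim(V^⊥ ∩ E⁻) is a well-defined integer. -/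
open Set RealInnerProductSpace

section AuxStmt19

variable {E : Type*} [NormedAddCommGroup E] [InnerProductSpace ℝ E] [CompleteSpace E]

/-- Cauchy–Schwarz inequality for a positive semidefinite symmetric bilinear form on a
submodule. -/
lemma aux_semi_cs_19 {T : E →L[ℝ] E} (hsa : ∀ v w : E, ⟪T v, w⟫ = ⟪v, T w⟫)
    {W : Submodule ℝ E} (hpos : ∀ v ∈ W, 0 ≤ ⟪T v, v⟫)
    {a b : E} (ha : a ∈ W) (hb : b ∈ W) :
    ⟪T a, b⟫ ^ 2 ≤ ⟪T a, a⟫ * ⟪T b, b⟫ := by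
  have hba : ⟪T b, a⟫ = ⟪T a, b⟫ := by rw [hsa b a, real_inner_comm]
  have key : ∀ t : ℝ, 0 ≤ ⟪T a, a⟫ * (t * t) + (2 * ⟪T a, b⟫) * t + ⟪T b, b⟫ := by
    intro t
    have h1 : 0 ≤ ⟪T (t • a + b), t • a + b⟫ :=
      hpos _ (W.add_mem (W.smul_mem t ha) hb)
    have expand : ⟪T (t • a + b), t • a + b⟫
        = ⟪T a, a⟫ * (t * t) + (2 * ⟪T a, b⟫) * t + ⟪T b, b⟫ := by
      simp only [map_add, map_smul, inner_add_left, inner_add_right,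
        real_inner_smul_left, real_inner_smul_right, hba]
      ring
    rw [expand] at h1; exact h1
  have hd := discrim_le_zero key
  rw [discrim] at hd
  nlinarith [hd]

/-- If a compact operator is bounded below on a submodule, that submodule is
finite dimensional. -/
lemma aux_fd_19 {Bc : E →L[ℝ] E} (hBc : IsCompactOperator Bc)
    (W : Submodule ℝ E) {κ : ℝ} (hκ : 0 < κ)
    (hlow : ∀ v ∈ W, κ * ‖v‖ ≤ ‖Bc v‖) : FiniteDimensional ℝ ↥W := by
  set M := W.topologicalClosure with hM
  have hMlow : ∀ v ∈ M, κ * ‖v‖ ≤ ‖Bc v‖ := by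
    have hcl : IsClosed {v : E | κ * ‖v‖ ≤ ‖Bc v‖} :=
      isClosed_le (by fun_prop) (by fun_prop)
    intro v hv
    have hsub : (M : Set E) ⊆ {v : E | κ * ‖v‖ ≤ ‖Bc v‖} := by
      rw [hM, Submodule.topologicalClosure_coe]
      exact closure_minimal (fun u hu => hlow u hu) hcl
    exact hsub hv
  set S : Set E := (M : Set E) ∩ Metric.closedBall 0 1 with hS
  have hSclosed : IsClosed S := W.isClosed_topologicalClosure.inter Metric.isClosed_closedBall
  have hSbdd : Bornology.IsBounded S :=
    (Metric.isBounded_closedBall (x := (0:E)) (r := 1)).subset inter_subset_right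
  obtain ⟨K, hKc, hKsub⟩ :=
    IsCompactOperator.image_subset_compact_of_bounded (f := (Bc : E →ₗ[ℝ] E)) hBc hSbdd
  have hseq : IsSeqCompact S := by
    intro u hu
    have hbd : ∀ n, Bc (u n) ∈ K := fun n => hKsub ⟨u n, hu n, rfl⟩
    obtain ⟨y, hyK, φ, hφ, hconv⟩ := hKc.tendsto_subseq hbd
    have hCauchyB : CauchySeq (fun n => Bc (u (φ n))) := hconv.cauchySeq
    have hCauchy : CauchySeq (fun n => u (φ n)) := by
      rw [Metric.cauchySeq_iff] at hCauchyB ⊢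
      intro ε hε
      obtain ⟨N, hN⟩ := hCauchyB (κ * ε) (by positivity)
      refine ⟨N, fun m hm n hn => ?_⟩
      have h1 := hN m hm n hn
      have hsub : u (φ m) - u (φ n) ∈ M := M.sub_mem (hu (φ m)).1 (hu (φ n)).1
      have h2 := hMlow _ hsub
      rw [dist_eq_norm] at h1 ⊢
      rw [map_sub] at h2
      have := lt_of_le_of_lt h2 h1
      exact lt_of_mul_lt_mul_left (by linarith) hκ.le
    obtain ⟨a, ha⟩ := cauchySeq_tendsto_of_complete hCauchy
    exact ⟨a, hSclosed.mem_of_tendsto ha (Filter.Eventually.of_forall fun n => hu (φ n)), φ, hφ, ha⟩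
  have hScompact : IsCompact S := hseq.isCompact
  have hball : IsCompact (Metric.closedBall (0 : ↥M) 1) := by
    rw [Subtype.isCompact_iff]
    convert hScompact using 1
    ext v
    constructor
    · rintro ⟨⟨w, hw⟩, hwb, rfl⟩
      exact ⟨hw, by simpa [Metric.mem_closedBall, dist_eq_norm] using hwb⟩
    · rintro ⟨hv, hvb⟩
      exact ⟨⟨v, hv⟩, by simpa [Metric.mem_closedBall, dist_eq_norm] using hvb, rfl⟩
  have : FiniteDimensional ℝ ↥M :=
    FiniteDimensional.of_isCompact_closedBall₀ ℝ one_pos (by simpa using hball)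
  exact Submodule.finiteDimensional_of_le W.le_topologicalClosure

/-- The image of a closed submodule under an operator bounded below on it is closed. -/
lemma aux_image_closed_19 {T : E →L[ℝ] E} {N : Submodule ℝ E} (hN : IsClosed (N : Set E))
    {c : ℝ} (hc : 0 < c) (hlow : ∀ v ∈ N, c * ‖v‖ ≤ ‖T v‖) :
    IsClosed (T '' (N : Set E)) := by
  apply IsSeqClosed.isClosed
  intro u y hu huy
  choose v hv hTv using hu
  have hCu : CauchySeq u := huy.cauchySeq
  have hCv : CauchySeq v := by
    rw [Metric.cauchySeq_iff] at hCu ⊢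
    intro ε hε
    obtain ⟨N', hN'⟩ := hCu (c * ε) (by positivity)
    refine ⟨N', fun m hm n hn => ?_⟩
    have h1 := hN' m hm n hn
    have h2 := hlow _ (N.sub_mem (hv m) (hv n))
    rw [map_sub, hTv m, hTv n] at h2
    rw [dist_eq_norm] at h1 ⊢
    have := lt_of_le_of_lt h2 h1
    exact lt_of_mul_lt_mul_left (by linarith) hc.le
  obtain ⟨w, hw⟩ := cauchySeq_tendsto_of_complete hCv
  have hwN : w ∈ N := hN.mem_of_tendsto hw (Filter.Eventually.of_forall hv)
  refine ⟨w, hwN, ?_⟩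
  have h1 : Filter.Tendsto (fun n => T (v n)) Filter.atTop (nhds (T w)) :=
    (T.continuous.tendsto w).comp hw
  have h2 : Filter.Tendsto (fun n => T (v n)) Filter.atTop (nhds y) := by
    simpa [hTv] using huy
  exact tendsto_nhds_unique h1 h2

end AuxStmt19

set_option maxHeartbeats 1000000 in
/-- For `f(x) = ½⟨Lx,x⟩ + b(x)` of class `C²` with `L` a self-adjoint
isomorphism and `D²b(x)` compact for every `x`, the Hessian
`D²f(x) = L + D²b(x)` is self-adjoint and Fredholm of index `0` (finite-dimensional
kernel and cokernel of equal dimension); and if `x` is a non-degenerate critical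
point (the Hessian is an isomorphism), then the negative eigenspace `V` of
`D²f(x)` satisfies: `V ∩ E⁺` and `V^⊥ ∩ E⁻` are finite dimensional, so
`eind(x) = dim(V ∩ E⁺) − dim(V^⊥ ∩ E⁻)` is a well-defined integer. -/
theorem stmt_19 {E : Type*} [NormedAddCommGroup E] [InnerProductSpace ℝ E] [CompleteSpace E]
    (f b : E → ℝ) (L : E ≃L[ℝ] E)
    (hLsa : ∀ v w : E, ⟪L v, w⟫ = ⟪v, L w⟫)
    (hf : ∀ x : E, f x = (1 / 2 : ℝ) * ⟪L x, x⟫ + b x)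
    (hfC2 : ContDiff ℝ 2 f)
    -- D²b(x) as a compact self-adjoint operator
    (B : E → E →L[ℝ] E)
    (hB : ∀ x v w : E, ⟪B x v, w⟫ = fderiv ℝ (fun y => fderiv ℝ b y v) x w)
    (hBcompact : ∀ x : E, IsCompactOperator (B x))
    -- the Hessian of f
    (Hf : E → E →L[ℝ] E) (hHf : ∀ x : E, Hf x = (L : E →L[ℝ] E) + B x)
    -- the spectral splitting E = E⁺ ⊕ E⁻ of L
    (Epos Eneg : Submodule ℝ E) (hsplit : IsCompl Epos Eneg)
    (horth : ∀ v ∈ Epos, ∀ w ∈ Eneg, ⟪v, w⟫ = 0)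
    (hLpos : ∀ v ∈ Epos, v ≠ 0 → 0 < ⟪L v, v⟫)
    (hLneg : ∀ v ∈ Eneg, v ≠ 0 → ⟪L v, v⟫ < 0)
    (x : E) :
    -- the Hessian is self-adjoint ...
    (∀ v w : E, ⟪Hf x v, w⟫ = ⟪v, Hf x w⟫) ∧
    -- ... and Fredholm of index 0
    (FiniteDimensional ℝ ↥(LinearMap.ker (Hf x : E →ₗ[ℝ] E)) ∧
      FiniteDimensional ℝ (E ⧸ LinearMap.range (Hf x : E →ₗ[ℝ] E)) ∧
      Module.finrank ℝ ↥(LinearMap.ker (Hf x : E →ₗ[ℝ] E)) =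
        Module.finrank ℝ (E ⧸ LinearMap.range (Hf x : E →ₗ[ℝ] E))) ∧
    -- at a non-degenerate critical point, for the negative eigenspace V of D²f(x):
    (Function.Bijective ⇑(Hf x) →
      ∀ V : Submodule ℝ E,
        (∀ v ∈ V, Hf x v ∈ V) →
        (∀ v ∈ V, v ≠ 0 → ⟪Hf x v, v⟫ < 0) →
        (∀ v ∈ Vᗮ, v ≠ 0 → 0 < ⟪Hf x v, v⟫) →
        FiniteDimensional ℝ ↥(V ⊓ Epos) ∧ FiniteDimensional ℝ ↥(Vᗮ ⊓ Eneg)) := by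
  have hTdef : Hf x = (L : E →L[ℝ] E) + B x := hHf x
  set T := Hf x with hT
  -- ### Part 1 : self-adjointness
  have hBsa : ∀ v w : E, ⟪B x v, w⟫ = ⟪v, B x w⟫ := by
    have hq : ContDiff ℝ 2 (fun y : E => (1 / 2 : ℝ) * ⟪L y, y⟫) := by
      have hL : ContDiff ℝ 2 (fun y : E => L y) := (L : E →L[ℝ] E).contDiff
      exact contDiff_const.mul (hL.inner ℝ contDiff_id)
    have hb : ContDiff ℝ 2 b := by
      have hbe : b = fun y => f y - (1 / 2 : ℝ) * ⟪L y, y⟫ := by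
        funext y; have := hf y; linarith
      rw [hbe]
      exact hfC2.sub hq
    have hsymm : IsSymmSndFDerivAt ℝ b x := hb.contDiffAt.isSymmSndFDerivAt (by simp)
    have hdiff : DifferentiableAt ℝ (fderiv ℝ b) x := by
      have h1 : ContDiff ℝ 1 (fderiv ℝ b) := hb.fderiv_right (m := 1) le_rfl
      exact (h1.differentiable one_ne_zero).differentiableAt
    have key : ∀ v w : E,
        fderiv ℝ (fun y => fderiv ℝ b y v) x w = fderiv ℝ (fderiv ℝ b) x w v := by
      intro v w
      have := fderiv_clm_apply (c := fderiv ℝ b) (u := fun _ => v) hdiff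
        (differentiableAt_const v)
      rw [this]
      simp
    intro v w
    rw [hB x v w, key v w, hsymm w v, ← key w v, ← hB x w v, real_inner_comm]
  have hsa : ∀ v w : E, ⟪T v, w⟫ = ⟪v, T w⟫ := by
    intro v w
    rw [hTdef]
    simp only [ContinuousLinearMap.add_apply, inner_add_left, inner_add_right,
      ContinuousLinearEquiv.coe_coe]
    rw [hLsa, hBsa]
  -- ### Part 2 : Fredholm of index 0
  set CL := ‖(L.symm : E →L[ℝ] E)‖ + 1 with hCL
  have hCLpos : (0:ℝ) < CL := by positivity
  have hker_low : ∀ v ∈ LinearMap.ker (T : E →ₗ[ℝ] E), CL⁻¹ * ‖v‖ ≤ ‖B x v‖ := by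
    intro v hv
    have hv0 : T v = 0 := hv
    have h1 : (L : E →L[ℝ] E) v + B x v = 0 := by
      rw [← ContinuousLinearMap.add_apply, ← hTdef]; exact hv0
    have hBv : B x v = -((L : E →L[ℝ] E) v) := eq_neg_of_add_eq_zero_right h1
    have hvnorm : ‖v‖ ≤ CL * ‖(L : E →L[ℝ] E) v‖ := by
      have h2 : ‖(L.symm : E →L[ℝ] E) ((L : E →L[ℝ] E) v)‖
          ≤ ‖(L.symm : E →L[ℝ] E)‖ * ‖(L : E →L[ℝ] E) v‖ :=
        (L.symm : E →L[ℝ] E).le_opNorm _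
      have h3 : (L.symm : E →L[ℝ] E) ((L : E →L[ℝ] E) v) = v := L.symm_apply_apply v
      rw [h3] at h2
      nlinarith [norm_nonneg ((L : E →L[ℝ] E) v)]
    rw [hBv, norm_neg]
    rw [inv_mul_le_iff₀ hCLpos]
    calc ‖v‖ ≤ CL * ‖(L : E →L[ℝ] E) v‖ := hvnorm
      _ = CL * ‖(L : E →L[ℝ] E) v‖ := rfl
  have hkerfd : FiniteDimensional ℝ ↥(LinearMap.ker (T : E →ₗ[ℝ] E)) :=
    aux_fd_19 (hBcompact x) _ (by positivity) hker_low
  set Kr := LinearMap.ker (T : E →ₗ[ℝ] E) with hKr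
  have hKclosed : IsClosed (Kr : Set E) := Submodule.closed_of_finiteDimensional Kr
  haveI : CompleteSpace Kr := hKclosed.completeSpace_coe
  have hcompl : IsCompl Kr Krᗮ := Submodule.isCompl_orthogonal_of_hasOrthogonalProjection
  have hbelow : ∃ c : ℝ, 0 < c ∧ ∀ v ∈ Krᗮ, c * ‖v‖ ≤ ‖T v‖ := by
    by_contra hcon
    push_neg at hcon
    have hcon' : ∀ n : ℕ, ∃ v ∈ Krᗮ, ‖T v‖ < (1 / (n + 1 : ℝ)) * ‖v‖ := by
      intro n
      obtain ⟨v, hvm, hvlt⟩ := hcon (1 / (n + 1 : ℝ)) (by positivity)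
      exact ⟨v, hvm, hvlt⟩
    choose v hvmem hvlt using hcon'
    have hvne : ∀ n, v n ≠ 0 := by
      intro n hn
      have := hvlt n
      rw [hn] at this
      simp at this
    set u : ℕ → E := fun n => (‖v n‖⁻¹ : ℝ) • v n with hu
    have humem : ∀ n, u n ∈ Krᗮ := fun n => Krᗮ.smul_mem _ (hvmem n)
    have hunorm : ∀ n, ‖u n‖ = 1 := by
      intro n
      rw [hu]
      simp only
      rw [norm_smul, norm_inv, norm_norm, inv_mul_cancel₀ (norm_ne_zero_iff.mpr (hvne n))]
    have huT : ∀ n, ‖T (u n)‖ ≤ 1 / (n + 1 : ℝ) := by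
      intro n
      have hvpos : (0:ℝ) < ‖v n‖ := norm_pos_iff.mpr (hvne n)
      have := hvlt n
      rw [hu]
      simp only [map_smul, norm_smul, norm_inv, norm_norm]
      rw [inv_mul_le_iff₀ hvpos]
      calc ‖T (v n)‖ ≤ (1 / (n + 1 : ℝ)) * ‖v n‖ := (hvlt n).le
        _ = ‖v n‖ * (1 / (n + 1 : ℝ)) := by ring
    have hTu0 : Filter.Tendsto (fun n => T (u n)) Filter.atTop (nhds 0) :=
      squeeze_zero_norm huT tendsto_one_div_add_atTop_nhds_zero_nat
    obtain ⟨K2, hK2c, hK2sub⟩ :=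
      IsCompactOperator.image_subset_compact_of_bounded (f := ((B x) : E →ₗ[ℝ] E))
        (hBcompact x) (Metric.isBounded_closedBall (x := (0:E)) (r := 1))
    have hmem : ∀ n, B x (u n) ∈ K2 := by
      intro n
      exact hK2sub ⟨u n, by simp [Metric.mem_closedBall, dist_eq_norm, hunorm n], rfl⟩
    obtain ⟨y, hy, φ, hφ, hyconv⟩ := hK2c.tendsto_subseq hmem
    have hTuφ : Filter.Tendsto (fun n => T (u (φ n))) Filter.atTop (nhds 0) :=
      hTu0.comp hφ.tendsto_atTop
    have huconv : Filter.Tendsto (fun n => u (φ n)) Filter.atTop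
        (nhds (L.symm (0 - y))) := by
      have h1 : ∀ n, u (φ n) = L.symm (T (u (φ n)) - B x (u (φ n))) := by
        intro n
        have h2 : T (u (φ n)) = L (u (φ n)) + B x (u (φ n)) := by
          rw [hTdef]; simp
        rw [h2, add_sub_cancel_right]
        rw [L.symm_apply_apply]
      have h2 : Filter.Tendsto (fun n => T (u (φ n)) - B x (u (φ n))) Filter.atTop
          (nhds (0 - y)) := hTuφ.sub hyconv
      exact (((L.symm : E →L[ℝ] E).continuous.tendsto _).comp h2).congr
        (fun n => (h1 n).symm)
    set w := L.symm (0 - y) with hwdef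
    have hwnorm : ‖w‖ = 1 := by
      have h3 : Filter.Tendsto (fun n => ‖u (φ n)‖) Filter.atTop (nhds ‖w‖) := huconv.norm
      have h4 : Filter.Tendsto (fun n => ‖u (φ n)‖) Filter.atTop (nhds 1) := by
        simpa [hunorm] using (tendsto_const_nhds : Filter.Tendsto (fun _ : ℕ => (1:ℝ))
          Filter.atTop (nhds 1))
      exact tendsto_nhds_unique h3 h4
    have hwmem : w ∈ Krᗮ :=
      (Kr.isClosed_orthogonal).mem_of_tendsto huconv
        (Filter.Eventually.of_forall fun n => humem (φ n))
    have hwT : T w = 0 :=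
      tendsto_nhds_unique ((T.continuous.tendsto w).comp huconv) hTuφ
    have hwker : w ∈ Kr := hwT
    have hw0 : w = 0 :=
      Submodule.disjoint_def.mp Kr.orthogonal_disjoint w hwker hwmem
    rw [hw0] at hwnorm
    simp at hwnorm
  obtain ⟨c, hc, hclow⟩ := hbelow
  have hrange_eq : ((LinearMap.range (T : E →ₗ[ℝ] E) : Submodule ℝ E) : Set E) = T '' (Krᗮ : Set E) := by
    ext z
    constructor
    · rintro ⟨w, rfl⟩
      have hw : w ∈ Kr ⊔ Krᗮ := by rw [hcompl.sup_eq_top]; trivial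
      obtain ⟨k, hk, p, hp, rfl⟩ := Submodule.mem_sup.mp hw
      refine ⟨p, hp, ?_⟩
      have hk0 : T k = 0 := hk
      rw [map_add, ContinuousLinearMap.coe_coe, hk0, zero_add]
    · rintro ⟨p, hp, rfl⟩
      exact ⟨p, rfl⟩
  have hrange_closed : IsClosed ((LinearMap.range (T : E →ₗ[ℝ] E) : Submodule ℝ E) : Set E) := by
    rw [hrange_eq]
    exact aux_image_closed_19 Kr.isClosed_orthogonal hc hclow
  haveI : CompleteSpace (LinearMap.range (T : E →ₗ[ℝ] E) : Submodule ℝ E) := hrange_closed.completeSpace_coe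
  have horth_eq : ((LinearMap.range (T : E →ₗ[ℝ] E) : Submodule ℝ E))ᗮ = Kr := by
    ext v
    rw [Submodule.mem_orthogonal]
    constructor
    · intro h
      have h1 : ⟪T (T v), v⟫ = 0 := h (T (T v)) ⟨T v, rfl⟩
      rw [hsa (T v) v] at h1
      exact LinearMap.mem_ker.mpr (inner_self_eq_zero.mp h1)
    · intro hv u hu
      obtain ⟨w, rfl⟩ := hu
      rw [ContinuousLinearMap.coe_coe, hsa w v]
      have hv0 : T v = 0 := hv
      rw [hv0, inner_zero_right]
  have e : (E ⧸ (LinearMap.range (T : E →ₗ[ℝ] E) : Submodule ℝ E)) ≃ₗ[ℝ] ↥Kr :=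
    ((LinearMap.range (T : E →ₗ[ℝ] E) : Submodule ℝ E).quotientEquivOfIsCompl _
      Submodule.isCompl_orthogonal_of_hasOrthogonalProjection).trans (LinearEquiv.ofEq _ _ horth_eq)
  have hcoker_fd : FiniteDimensional ℝ (E ⧸ (LinearMap.range (T : E →ₗ[ℝ] E) : Submodule ℝ E)) :=
    Module.Finite.equiv e.symm
  have hfinrank : Module.finrank ℝ ↥(LinearMap.ker (T : E →ₗ[ℝ] E))
      = Module.finrank ℝ (E ⧸ (LinearMap.range (T : E →ₗ[ℝ] E) : Submodule ℝ E)) :=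
    (LinearEquiv.finrank_eq e).symm
  refine ⟨hsa, ⟨hkerfd, hcoker_fd, hfinrank⟩, ?_⟩
  -- ### Part 3 : commensurability at a non-degenerate critical point
  intro hbij V hVinv hVneg hVpos
  have hkerbot : LinearMap.ker (T : E →ₗ[ℝ] E) = ⊥ := LinearMap.ker_eq_bot.mpr hbij.injective
  have hrantop : LinearMap.range (T : E →ₗ[ℝ] E) = ⊤ := LinearMap.range_eq_top.mpr hbij.surjective
  set e2 := ContinuousLinearEquiv.ofBijective T hkerbot hrantop with he2
  have he2app : ∀ v : E, e2 v = T v := fun v => rfl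
  set C := ‖(e2.symm : E →L[ℝ] E)‖ + 1 with hCdef
  have hCpos : (0:ℝ) < C := by positivity
  have hClow : ∀ v : E, ‖v‖ ≤ C * ‖T v‖ := by
    intro v
    have h1 : (e2.symm : E →L[ℝ] E) (e2 v) = v := e2.symm_apply_apply v
    have h2 : ‖(e2.symm : E →L[ℝ] E) (e2 v)‖ ≤ ‖(e2.symm : E →L[ℝ] E)‖ * ‖e2 v‖ :=
      (e2.symm : E →L[ℝ] E).le_opNorm _
    rw [h1, he2app] at h2
    nlinarith [norm_nonneg (T v)]
  -- coercivity of a self-adjoint, bounded-below operator on an invariant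
  -- positive-semidefinite subspace
  have coercive : ∀ (T' : E →L[ℝ] E), (∀ v w : E, ⟪T' v, w⟫ = ⟪v, T' w⟫) →
      (∀ v : E, ‖v‖ ≤ C * ‖T' v‖) →
      ∀ (W : Submodule ℝ E), (∀ v ∈ W, T' v ∈ W) → (∀ v ∈ W, 0 ≤ ⟪T' v, v⟫) →
      ∀ v ∈ W, ‖v‖ ^ 2 ≤ (C ^ 2 * ‖T'‖ + 1) * ⟪T' v, v⟫ := by
    intro T' hsa' hlow' W hinv' hpos' v hv
    by_cases hTv : T' v = 0
    · have hv0 : v = 0 := by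
        have := hlow' v
        rw [hTv] at this
        simp only [norm_zero, mul_zero] at this
        exact norm_le_zero_iff.mp this
      rw [hv0]
      simp
    · have hcs := aux_semi_cs_19 hsa' hpos' hv (hinv' v hv)
      have h1 : ⟪T' v, T' v⟫ = ‖T' v‖ ^ 2 := real_inner_self_eq_norm_sq _
      have h2 : ⟪T' (T' v), T' v⟫ ≤ ‖T'‖ * ‖T' v‖ ^ 2 := by
        calc ⟪T' (T' v), T' v⟫ ≤ ‖T' (T' v)‖ * ‖T' v‖ := real_inner_le_norm _ _
          _ ≤ (‖T'‖ * ‖T' v‖) * ‖T' v‖ := by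
              have := T'.le_opNorm (T' v)
              nlinarith [norm_nonneg (T' v)]
          _ = ‖T'‖ * ‖T' v‖ ^ 2 := by ring
      have h3 : (0:ℝ) < ‖T' v‖ := norm_pos_iff.mpr hTv
      have h4 : 0 ≤ ⟪T' v, v⟫ := hpos' v hv
      have h5 : ‖v‖ ≤ C * ‖T' v‖ := hlow' v
      have h6 : ‖T' v‖ ^ 2 ≤ ‖T'‖ * ⟪T' v, v⟫ := by
        have h7 : ‖T' v‖ ^ 2 * ‖T' v‖ ^ 2 ≤ (‖T'‖ * ⟪T' v, v⟫) * ‖T' v‖ ^ 2 := by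
          nlinarith [hcs]
        exact le_of_mul_le_mul_right h7 (by positivity)
      have h8 : ‖v‖ ^ 2 ≤ C ^ 2 * ‖T' v‖ ^ 2 := by nlinarith [norm_nonneg v, h3.le]
      have h9 : C ^ 2 * ‖T' v‖ ^ 2 ≤ C ^ 2 * (‖T'‖ * ⟪T' v, v⟫) :=
        mul_le_mul_of_nonneg_left h6 (sq_nonneg C)
      have h10 : C ^ 2 * (‖T'‖ * ⟪T' v, v⟫) ≤ (C ^ 2 * ‖T'‖ + 1) * ⟪T' v, v⟫ := by nlinarith
      linarith
  constructor
  · -- V ⊓ Epos is finite dimensional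
    set D := C ^ 2 * ‖(-T : E →L[ℝ] E)‖ + 1 with hDdef
    have hD : (0:ℝ) < D := by positivity
    apply aux_fd_19 (hBcompact x) _ (κ := D⁻¹) (by positivity)
    intro v hv
    obtain ⟨hvV, hvE⟩ := Submodule.mem_inf.mp hv
    have hneg := coercive (-T)
      (by intro a c; simp only [ContinuousLinearMap.neg_apply, inner_neg_left,
        inner_neg_right]; rw [hsa a c])
      (by intro a; simpa using hClow a)
      V (fun a ha => V.neg_mem (hVinv a ha))
      (by
        intro a ha
        by_cases ha0 : a = 0
        · simp [ha0]
        · have := hVneg a ha ha0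
          simp only [ContinuousLinearMap.neg_apply, inner_neg_left]
          linarith)
      v hvV
    simp only [ContinuousLinearMap.neg_apply, inner_neg_left] at hneg
    -- hneg : ‖v‖^2 ≤ D * (-⟪T v, v⟫)
    have hLv : 0 ≤ ⟪(L : E →L[ℝ] E) v, v⟫ := by
      by_cases hv0 : v = 0
      · simp [hv0]
      · have := (hLpos v hvE hv0).le
        simpa [ContinuousLinearEquiv.coe_coe] using this
    have hTsplit : ⟪T v, v⟫ = ⟪(L : E →L[ℝ] E) v, v⟫ + ⟪B x v, v⟫ := by
      rw [hTdef]
      simp [inner_add_left]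
    have hBle : ‖v‖ ^ 2 ≤ D * (-⟪B x v, v⟫) := by
      have h11 : -⟪T v, v⟫ ≤ -⟪B x v, v⟫ := by rw [hTsplit]; linarith
      have h12 : D * (-⟪T v, v⟫) ≤ D * (-⟪B x v, v⟫) :=
        mul_le_mul_of_nonneg_left h11 hD.le
      rw [← hDdef] at hneg
      linarith
    have hinner : -⟪B x v, v⟫ ≤ ‖B x v‖ * ‖v‖ := by
      have := abs_real_inner_le_norm (B x v) v
      have := neg_abs_le (⟪B x v, v⟫)
      nlinarith [abs_real_inner_le_norm (B x v) v]
    by_cases hv0 : v = 0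
    · simp [hv0]
    · have hvpos : (0:ℝ) < ‖v‖ := norm_pos_iff.mpr hv0
      rw [inv_mul_le_iff₀ hD]
      have h9 : ‖v‖ ^ 2 ≤ D * (‖B x v‖ * ‖v‖) := by nlinarith
      have := le_of_mul_le_mul_right (by nlinarith : ‖v‖ * ‖v‖ ≤ (D * ‖B x v‖) * ‖v‖) hvpos
      linarith
  · -- Vᗮ ⊓ Eneg is finite dimensional
    set D := C ^ 2 * ‖T‖ + 1 with hDdef
    have hD : (0:ℝ) < D := by positivity
    apply aux_fd_19 (hBcompact x) _ (κ := D⁻¹) (by positivity)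
    intro v hv
    obtain ⟨hvV, hvE⟩ := Submodule.mem_inf.mp hv
    have hVperp_inv : ∀ a ∈ Vᗮ, T a ∈ Vᗮ := by
      intro a ha
      rw [Submodule.mem_orthogonal]
      intro u hu
      rw [real_inner_comm, hsa, real_inner_comm]
      exact ha (T u) (hVinv u hu)
    have hpos := coercive T hsa hClow Vᗮ hVperp_inv
      (by
        intro a ha
        by_cases ha0 : a = 0
        · simp [ha0]
        · exact (hVpos a ha ha0).le)
      v hvV
    -- hpos : ‖v‖^2 ≤ D * ⟪T v, v⟫
    have hLv : ⟪(L : E →L[ℝ] E) v, v⟫ ≤ 0 := by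
      by_cases hv0 : v = 0
      · simp [hv0]
      · have := (hLneg v hvE hv0).le
        simpa [ContinuousLinearEquiv.coe_coe] using this
    have hTsplit : ⟪T v, v⟫ = ⟪(L : E →L[ℝ] E) v, v⟫ + ⟪B x v, v⟫ := by
      rw [hTdef]
      simp [inner_add_left]
    have hBle : ‖v‖ ^ 2 ≤ D * ⟪B x v, v⟫ := by
      have h11 : ⟪T v, v⟫ ≤ ⟪B x v, v⟫ := by rw [hTsplit]; linarith
      have h12 : D * ⟪T v, v⟫ ≤ D * ⟪B x v, v⟫ :=
        mul_le_mul_of_nonneg_left h11 hD.le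
      rw [← hDdef] at hpos
      linarith
    have hinner : ⟪B x v, v⟫ ≤ ‖B x v‖ * ‖v‖ := real_inner_le_norm _ _
    by_cases hv0 : v = 0
    · simp [hv0]
    · have hvpos : (0:ℝ) < ‖v‖ := norm_pos_iff.mpr hv0
      rw [inv_mul_le_iff₀ hD]
      have := le_of_mul_le_mul_right (by nlinarith : ‖v‖ * ‖v‖ ≤ (D * ‖B x v‖) * ‖v‖) hvpos
      linarith
end
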